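/- Let 𝒪 be an algebra of observables on a nonempty set Ω and P an observable probability. For every co-zero set U: P(U) = sup{P(F) : F a zero set, F ⊆ U} = sup{∫ X dP : X ∈ 𝒪, X ⪯ U}. -/

import Mathlib

open Filter MeasureTheory Topology

variable {Ω : Type*}

/-- A family `𝒪` of real functions on `Ω` is an algebra of observables: for every `n ≥ 1`,
all `X₁, …, Xₙ ∈ 𝒪` and every `φ` continuous on the image of `(X₁, …, Xₙ)`,
the composite `ω ↦ φ (X₁ ω, …, Xₙ ω)` belongs to `𝒪`. -/
def IsObsAlg (o : Set (Ω → ℝ)) : Prop :=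
  ∀ n : ℕ, 0 < n → ∀ X : Fin n → Ω → ℝ, (∀ i, X i ∈ o) →
    ∀ φ : (Fin n → ℝ) → ℝ,
      ContinuousOn φ (Set.range fun ω => fun i => X i ω) →
      (fun ω => φ fun i => X i ω) ∈ o

/-- `F ⊆ Ω` is a zero set if `F = X⁻¹({0})` for some `X ∈ 𝒪`. -/
def IsZeroSet (o : Set (Ω → ℝ)) (F : Set Ω) : Prop :=
  ∃ X ∈ o, F = X ⁻¹' {0}

/-- A co-zero set is the complement of a zero set. -/
def IsCozeroSet (o : Set (Ω → ℝ)) (U : Set Ω) : Prop :=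
  IsZeroSet o Uᶜ

/-- The observable sets are the zero sets together with the co-zero sets. -/
def IsObsSet (o : Set (Ω → ℝ)) (A : Set Ω) : Prop :=
  IsZeroSet o A ∨ IsCozeroSet o A

/-- An observable probability: additive on disjoint observable sets with observable union,
nonnegative on observable sets, normalized, with monotone convergence along increasing
sequences of co-zero sets whose union is a co-zero set. -/
def IsObsProb (o : Set (Ω → ℝ)) (P : Set Ω → ℝ) : Prop :=
  (∀ A B : Set Ω, IsObsSet o A → IsObsSet o B → Disjoint A B →
    IsObsSet o (A ∪ B) → P (A ∪ B) = P A + P B) ∧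
  (∀ A : Set Ω, IsObsSet o A → 0 ≤ P A) ∧
  (P Set.univ = 1) ∧
  (∀ (U : ℕ → Set Ω) (V : Set Ω), (∀ i, IsCozeroSet o (U i)) → Monotone U →
    IsCozeroSet o V → (⋃ i, U i) = V →
    Tendsto (fun i => P (U i)) atTop (𝓝 (P V)))

/-- `μ` is the distribution of `X` under `P`: a Borel probability measure on `ℝ` with
`μ U = P (X ⁻¹' U)` for every open `U ⊆ ℝ`. -/
def IsDistribution (o : Set (Ω → ℝ)) (P : Set Ω → ℝ) (X : Ω → ℝ)
    (μ : Measure ℝ) : Prop :=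
  IsProbabilityMeasure μ ∧
  ∀ U : Set ℝ, IsOpen U → μ U = ENNReal.ofReal (P (X ⁻¹' U))

/-- Membership in `𝒪^∞`: a bounded member of `𝒪`. -/
def MemBdd (o : Set (Ω → ℝ)) (X : Ω → ℝ) : Prop :=
  X ∈ o ∧ ∃ M : ℝ, ∀ ω, |X ω| ≤ M

/-- The closed algebra `𝒜_X` generated by `X`: all `φ ∘ X` with `φ : ℝ → ℝ` continuous
(equivalent, by Tietze extension, to continuous functions on the closure of the image). -/
def ClosedAlg (X : Ω → ℝ) : Set (Ω → ℝ) :=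
  {Y | ∃ φ : ℝ → ℝ, Continuous φ ∧ Y = φ ∘ X}

/-- Positivity of a functional on `𝒪^∞`. -/
def PositiveFunc (o : Set (Ω → ℝ)) (E : (Ω → ℝ) → ℝ) : Prop :=
  ∀ X, MemBdd o X → (∀ ω, 0 ≤ X ω) → 0 ≤ E X

/-- Quasi-linearity: `E` is linear on each `𝒜_X`, `X ∈ 𝒪^∞`. -/
def QuasiLinear (o : Set (Ω → ℝ)) (E : (Ω → ℝ) → ℝ) : Prop :=
  ∀ X, MemBdd o X → ∀ Y ∈ ClosedAlg X, ∀ Z ∈ ClosedAlg X, ∀ a b : ℝ,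
    E (fun ω => a * Y ω + b * Z ω) = a * E Y + b * E Z

/-- `X ⪯ U` : there is a zero set `F` with `X ≤ 1_F` pointwise and `F ⊆ U`. -/
def PrecU (o : Set (Ω → ℝ)) (X : Ω → ℝ) (U : Set Ω) : Prop :=
  ∃ F : Set Ω, IsZeroSet o F ∧ (∀ ω, X ω ≤ F.indicator (fun _ => (1:ℝ)) ω) ∧ F ⊆ U

/-- An observable expectation: quasi-linear, positive, normalized, with monotone
convergence along increasing sequences in `𝒪^∞` converging pointwise in `𝒪^∞`. -/
def IsObsExp (o : Set (Ω → ℝ)) (E : (Ω → ℝ) → ℝ) : Prop :=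
  QuasiLinear o E ∧ PositiveFunc o E ∧ E (fun _ => 1) = 1 ∧
  (∀ (X : ℕ → Ω → ℝ) (Y : Ω → ℝ), (∀ n, MemBdd o (X n)) → MemBdd o Y →
    (∀ n ω, X n ω ≤ X (n+1) ω) →
    (∀ ω, Tendsto (fun n => X n ω) atTop (𝓝 (Y ω))) →
    Tendsto (fun n => E (X n)) atTop (𝓝 (E Y)))

/-- A quasi-additive probability: axioms (I)-(III) of an observable probability
together with inner regularity (IV'): `P U = sup {P F : F zero set, F ⊆ U}`. -/
def IsQuasiAddProb (o : Set (Ω → ℝ)) (P : Set Ω → ℝ) : Prop :=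
  (∀ A B : Set Ω, IsObsSet o A → IsObsSet o B → Disjoint A B →
    IsObsSet o (A ∪ B) → P (A ∪ B) = P A + P B) ∧
  (∀ A : Set Ω, IsObsSet o A → 0 ≤ P A) ∧
  (P Set.univ = 1) ∧
  (∀ U : Set Ω, IsCozeroSet o U →
    P U = sSup {r | ∃ F : Set Ω, IsZeroSet o F ∧ F ⊆ U ∧ r = P F})


open Set

section Helpers

variable {o : Set (Ω → ℝ)} {P : Set Ω → ℝ}

lemma comp1 (hO : IsObsAlg o) {X : Ω → ℝ} (hX : X ∈ o) {φ : ℝ → ℝ} (hφ : Continuous φ) :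
    (fun ω => φ (X ω)) ∈ o := by
  have := hO 1 one_pos (fun _ => X) (fun _ => hX) (fun v => φ (v 0))
    ((hφ.comp (continuous_apply 0)).continuousOn)
  simpa using this

lemma comp2 (hO : IsObsAlg o) {X Y : Ω → ℝ} (hX : X ∈ o) (hY : Y ∈ o) {φ : ℝ → ℝ → ℝ}
    (hφ : Continuous fun p : ℝ × ℝ => φ p.1 p.2) :
    (fun ω => φ (X ω) (Y ω)) ∈ o := by
  have hpair : Continuous (fun v : Fin 2 → ℝ => ((v 0, v 1) : ℝ × ℝ)) :=
    (continuous_apply 0).prodMk (continuous_apply 1)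
  have hc : Continuous (fun v : Fin 2 → ℝ => φ (v 0) (v 1)) := hφ.comp hpair
  have := hO 2 two_pos ![X, Y] (by
      intro i
      fin_cases i <;> simpa)
    (fun v => φ (v 0) (v 1)) hc.continuousOn
  simpa using this

lemma zero_preimage_closed (hO : IsObsAlg o) {X : Ω → ℝ} (hX : X ∈ o) {C : Set ℝ}
    (hC : IsClosed C) : IsZeroSet o (X ⁻¹' C) := by
  rcases C.eq_empty_or_nonempty with h | h
  · refine ⟨fun ω => 1, ?_, ?_⟩
    · exact comp1 hO hX continuous_const
    · simp [h]
  · refine ⟨fun ω => Metric.infDist (X ω) C, comp1 hO hX (Metric.continuous_infDist_pt C), ?_⟩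
    ext ω
    simp [hC.mem_iff_infDist_zero h]

lemma cozero_preimage_open (hO : IsObsAlg o) {X : Ω → ℝ} (hX : X ∈ o) {U : Set ℝ}
    (hU : IsOpen U) : IsCozeroSet o (X ⁻¹' U) := by
  have : (X ⁻¹' U)ᶜ = X ⁻¹' Uᶜ := rfl
  rw [IsCozeroSet, this]
  exact zero_preimage_closed hO hX hU.isClosed_compl

lemma zero_union (hO : IsObsAlg o) {F G : Set Ω} (hF : IsZeroSet o F) (hG : IsZeroSet o G) :
    IsZeroSet o (F ∪ G) := by
  obtain ⟨f, hf, rfl⟩ := hF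
  obtain ⟨g, hg, rfl⟩ := hG
  refine ⟨fun ω => f ω * g ω, comp2 hO hf hg continuous_mul, ?_⟩
  ext ω
  simp [mul_eq_zero]

lemma zero_inter (hO : IsObsAlg o) {F G : Set Ω} (hF : IsZeroSet o F) (hG : IsZeroSet o G) :
    IsZeroSet o (F ∩ G) := by
  obtain ⟨f, hf, rfl⟩ := hF
  obtain ⟨g, hg, rfl⟩ := hG
  refine ⟨fun ω => f ω ^ 2 + g ω ^ 2,
    comp2 hO hf hg (φ := fun a b => a ^ 2 + b ^ 2) (by continuity), ?_⟩
  ext ω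
  constructor
  · rintro ⟨h1, h2⟩
    simp_all
  · intro h
    have h1 := sq_nonneg (f ω); have h2 := sq_nonneg (g ω)
    have hf0 : f ω ^ 2 = 0 := by
      simp only [mem_preimage, mem_singleton_iff] at h; nlinarith
    have hg0 : g ω ^ 2 = 0 := by
      simp only [mem_preimage, mem_singleton_iff] at h; nlinarith
    constructor <;> simp_all [pow_eq_zero_iff]

lemma zero_empty (hO : IsObsAlg o) {X : Ω → ℝ} (hX : X ∈ o) : IsZeroSet o (∅ : Set Ω) := by
  have := zero_preimage_closed hO hX (isClosed_empty (X := ℝ))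
  simpa using this

lemma zero_univ (hO : IsObsAlg o) {X : Ω → ℝ} (hX : X ∈ o) : IsZeroSet o (univ : Set Ω) := by
  have := zero_preimage_closed hO hX (isClosed_univ (X := ℝ))
  simpa using this

lemma P_empty (hO : IsObsAlg o) (hP : IsObsProb o P) {X : Ω → ℝ} (hX : X ∈ o) :
    P ∅ = 0 := by
  have hobs : IsObsSet o (∅ : Set Ω) := Or.inl (zero_empty hO hX)
  have := hP.1 ∅ ∅ hobs hobs (by simp) (by simpa using hobs)
  simp only [Set.union_empty] at this
  linarith

/-- zero set inside cozero set -/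
lemma P_mono_zc (hO : IsObsAlg o) (hP : IsObsProb o P) {F U : Set Ω} (hF : IsZeroSet o F)
    (hU : IsCozeroSet o U) (hsub : F ⊆ U) : P F ≤ P U := by
  have hrest : IsCozeroSet o (U ∩ Fᶜ) := by
    rw [IsCozeroSet, Set.compl_inter, compl_compl]
    exact zero_union hO hU hF
  have hadd := hP.1 F (U ∩ Fᶜ) (Or.inl hF) (Or.inr hrest)
    (Set.disjoint_left.2 fun ω hω hω' => hω'.2 hω)
    (by
      have : F ∪ U ∩ Fᶜ = U := by
        ext ω; constructor
        · rintro (h | h); exacts [hsub h, h.1]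
        · intro h; by_cases hF' : ω ∈ F; exacts [Or.inl hF', Or.inr ⟨h, hF'⟩]
      rw [this]; exact Or.inr hU)
  have hun : F ∪ U ∩ Fᶜ = U := by
    ext ω; constructor
    · rintro (h | h); exacts [hsub h, h.1]
    · intro h; by_cases hF' : ω ∈ F; exacts [Or.inl hF', Or.inr ⟨h, hF'⟩]
  rw [hun] at hadd
  have := hP.2.1 (U ∩ Fᶜ) (Or.inr hrest)
  linarith

/-- cozero set inside zero set -/
lemma P_mono_cz (hO : IsObsAlg o) (hP : IsObsProb o P) {V F : Set Ω} (hV : IsCozeroSet o V)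
    (hF : IsZeroSet o F) (hsub : V ⊆ F) : P V ≤ P F := by
  have hrest : IsZeroSet o (F ∩ Vᶜ) := zero_inter hO hF hV
  have hun : V ∪ F ∩ Vᶜ = F := by
    ext ω; constructor
    · rintro (h | h); exacts [hsub h, h.1]
    · intro h; by_cases hV' : ω ∈ V; exacts [Or.inl hV', Or.inr ⟨h, hV'⟩]
  have hadd := hP.1 V (F ∩ Vᶜ) (Or.inr hV) (Or.inl hrest)
    (Set.disjoint_left.2 fun ω hω hω' => hω'.2 hω)
    (by rw [hun]; exact Or.inl hF)
  rw [hun] at hadd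
  have := hP.2.1 (F ∩ Vᶜ) (Or.inl hrest)
  linarith

end Helpers

section Part1

variable {o : Set (Ω → ℝ)} {P : Set Ω → ℝ}

lemma part1 (hO : IsObsAlg o) (hP : IsObsProb o P) (U : Set Ω) (hU : IsCozeroSet o U) :
    P U = sSup {r | ∃ F : Set Ω, IsZeroSet o F ∧ F ⊆ U ∧ r = P F} := by
  obtain ⟨g, hg, hUc⟩ := hU
  have hUg : U = {ω | g ω ≠ 0} := by
    have := congrArg compl hUc
    rw [compl_compl] at this
    rw [this]
    ext ω; simp
  set S := {r | ∃ F : Set Ω, IsZeroSet o F ∧ F ⊆ U ∧ r = P F} with hS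
  have habs : (fun ω => |g ω|) ∈ o := comp1 hO hg continuous_abs
  set V : ℕ → Set Ω := fun k => (fun ω => |g ω|) ⁻¹' Ioi (1 / (k + 1)) with hV
  set F : ℕ → Set Ω := fun k => (fun ω => |g ω|) ⁻¹' Ici (1 / (k + 1)) with hF
  have hVcoz : ∀ k, IsCozeroSet o (V k) := fun k => cozero_preimage_open hO habs isOpen_Ioi
  have hFzero : ∀ k, IsZeroSet o (F k) := fun k => zero_preimage_closed hO habs isClosed_Ici
  have hpos : ∀ k : ℕ, (0:ℝ) < 1 / (k + 1) := fun k => by positivity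
  have hFU : ∀ k, F k ⊆ U := by
    intro k ω hω
    rw [hUg]
    simp only [hF, mem_preimage, mem_Ici] at hω
    have hgt : 0 < |g ω| := lt_of_lt_of_le (hpos k) hω
    simp only [mem_setOf_eq]
    intro h
    simp [h] at hgt
  have hVF : ∀ k, V k ⊆ F k := fun k => preimage_mono Ioi_subset_Ici_self
  have hVmono : Monotone V := by
    apply monotone_nat_of_le_succ
    intro k
    apply preimage_mono
    apply Ioi_subset_Ioi
    apply one_div_le_one_div_of_le (by positivity)
    push_cast; linarith
  have hVunion : (⋃ k, V k) = U := by
    rw [hUg]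
    ext ω
    simp only [hV, mem_iUnion, mem_preimage, mem_Ioi, mem_setOf_eq]
    constructor
    · rintro ⟨k, hk⟩
      intro h
      simp [h] at hk
      linarith [hpos k]
    · intro h
      have hgt : 0 < |g ω| := abs_pos.2 h
      obtain ⟨n, hn⟩ := exists_nat_one_div_lt hgt
      exact ⟨n, by exact_mod_cast hn⟩
  have htend : Tendsto (fun k => P (V k)) atTop (𝓝 (P U)) :=
    hP.2.2.2 V U hVcoz hVmono ⟨g, hg, hUc⟩ hVunion
  have hmemS : ∀ k, P (F k) ∈ S := fun k => ⟨F k, hFzero k, hFU k, rfl⟩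
  have hbddS : ∀ r ∈ S, r ≤ P U := by
    rintro r ⟨G, hG, hGU, rfl⟩
    exact P_mono_zc hO hP hG ⟨g, hg, hUc⟩ hGU
  have hBdd : BddAbove S := ⟨P U, fun r hr => hbddS r hr⟩
  have hne : S.Nonempty := ⟨P ∅, ∅, zero_empty hO hg, empty_subset _, rfl⟩
  refine le_antisymm ?_ (csSup_le hne hbddS)
  refine le_of_tendsto htend (Eventually.of_forall fun k => ?_)
  calc P (V k) ≤ P (F k) := P_mono_cz hO hP (hVcoz k) (hFzero k) (hVF k)
    _ ≤ sSup S := le_csSup hBdd (hmemS k)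

end Part1

section Dist

variable {o : Set (Ω → ℝ)} {P : Set Ω → ℝ}

lemma exists_distribution (hO : IsObsAlg o) (hP : IsObsProb o P) {X : Ω → ℝ} (hX : X ∈ o)
    (h0 : ∀ ω, 0 ≤ X ω) (h1 : ∀ ω, X ω ≤ 1) :
    ∃ μ : Measure ℝ, IsDistribution o P X μ := by
  classical
  set c : ℝ → ℝ := fun t => P (X ⁻¹' Iic t) with hcdef
  have hzero : ∀ t : ℝ, IsZeroSet o (X ⁻¹' Iic t) :=
    fun t => zero_preimage_closed hO hX isClosed_Iic
  have hcoz : ∀ {V : Set ℝ}, IsOpen V → IsCozeroSet o (X ⁻¹' V) :=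
    fun hV => cozero_preimage_open hO hX hV
  have hPpos : ∀ {A : Set Ω}, IsObsSet o A → 0 ≤ P A := fun h => hP.2.1 _ h
  have hc_neg : ∀ t : ℝ, t < 0 → c t = 0 := by
    intro t ht
    have hempty : X ⁻¹' Iic t = ∅ := by
      ext ω
      simp only [mem_preimage, mem_Iic, mem_empty_iff_false, iff_false, not_le]
      exact lt_of_lt_of_le ht (h0 ω)
    simp only [hcdef, hempty]
    exact P_empty hO hP hX
  have hc_one : ∀ t : ℝ, 1 ≤ t → c t = 1 := by
    intro t ht
    have huniv : X ⁻¹' Iic t = univ := by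
      ext ω
      simp only [mem_preimage, mem_Iic, mem_univ, iff_true]
      exact le_trans (h1 ω) ht
    simp only [hcdef, huniv]
    exact hP.2.2.1
  have hmono : Monotone c := by
    intro s t hst
    rcases eq_or_lt_of_le hst with rfl | hlt
    · exact le_refl _
    · calc c s ≤ P (X ⁻¹' Iio t) := P_mono_zc hO hP (hzero s) (hcoz isOpen_Iio)
            (preimage_mono (fun x hx => lt_of_le_of_lt hx hlt))
        _ ≤ c t := P_mono_cz hO hP (hcoz isOpen_Iio) (hzero t)
            (preimage_mono Iio_subset_Iic_self)
  have hsplit : ∀ s : ℝ, c s + P (X ⁻¹' Ioi s) = 1 := by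
    intro s
    have hd : Disjoint (X ⁻¹' Iic s) (X ⁻¹' Ioi s) :=
      (Set.Iic_disjoint_Ioi le_rfl).preimage X
    have hu : X ⁻¹' Iic s ∪ X ⁻¹' Ioi s = univ := by
      rw [← preimage_union, Iic_union_Ioi, preimage_univ]
    have h := hP.1 _ _ (Or.inl (hzero s)) (Or.inr (hcoz isOpen_Ioi)) hd
      (by rw [hu]; exact Or.inl (zero_univ hO hX))
    rw [hu, hP.2.2.1] at h
    simp only [hcdef]
    linarith
  have htail : ∀ x : ℝ, Tendsto (fun k : ℕ => P (X ⁻¹' Ioi (x + 1/(k+1)))) atTop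
      (𝓝 (P (X ⁻¹' Ioi x))) := by
    intro x
    have hm : Monotone fun k : ℕ => X ⁻¹' Ioi (x + 1/(k+1)) := by
      apply monotone_nat_of_le_succ
      intro k
      apply preimage_mono
      apply Ioi_subset_Ioi
      have h12 : 1/((k:ℝ)+1+1) ≤ 1/((k:ℝ)+1) :=
        one_div_le_one_div_of_le (by positivity) (by linarith)
      push_cast
      linarith
    have hun : (⋃ k : ℕ, X ⁻¹' Ioi (x + 1/(k+1))) = X ⁻¹' Ioi x := by
      ext ω
      simp only [mem_iUnion, mem_preimage, mem_Ioi]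
      constructor
      · rintro ⟨k, hk⟩
        have hk1 : (0:ℝ) < 1/((k:ℝ)+1) := by positivity
        linarith
      · intro h
        obtain ⟨n, hn⟩ := exists_nat_one_div_lt (sub_pos.2 h)
        exact ⟨n, by push_cast at hn ⊢; linarith⟩
    exact hP.2.2.2 _ _ (fun k => hcoz isOpen_Ioi) hm (hcoz isOpen_Ioi) hun
  have hseq : ∀ x : ℝ, Tendsto (fun k : ℕ => c (x + 1/(k+1))) atTop (𝓝 (c x)) := by
    intro x
    have h2 : Tendsto (fun k : ℕ => 1 - P (X ⁻¹' Ioi (x + 1/(k+1)))) atTop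
        (𝓝 (1 - P (X ⁻¹' Ioi x))) := (htail x).const_sub 1
    have h3 : (1:ℝ) - P (X ⁻¹' Ioi x) = c x := by have := hsplit x; linarith
    rw [h3] at h2
    apply h2.congr
    intro k
    have := hsplit (x + 1/(k+1))
    linarith
  have hrc : ∀ x : ℝ, ContinuousWithinAt c (Ici x) x := by
    intro x
    rw [← continuousWithinAt_Ioi_iff_Ici]
    have hseqT : Tendsto (fun k : ℕ => x + 1/(k+1)) atTop (𝓝[>] x) := by
      apply tendsto_nhdsWithin_of_tendsto_nhds_of_eventually_within
      · have h := tendsto_const_nhds (x := x) (f := atTop (α := ℕ)) |>.add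
          tendsto_one_div_add_atTop_nhds_zero_nat
        simpa using h
      · filter_upwards with k
        simp only [mem_Ioi]
        have : (0:ℝ) < 1/((k:ℝ)+1) := by positivity
        push_cast
        linarith
    have h2 := hmono.tendsto_rightLim x
    have h3 : Tendsto (fun k : ℕ => c (x + 1/(k+1))) atTop (𝓝 (Function.rightLim c x)) :=
      h2.comp hseqT
    have h4 := tendsto_nhds_unique h3 (hseq x)
    rw [ContinuousWithinAt, ← h4]
    exact h2
  set f : StieltjesFunction ℝ := ⟨c, hmono, hrc⟩ with hfdef
  have hfc : (⇑f : ℝ → ℝ) = c := rfl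
  have hbot : Tendsto (⇑f) atBot (𝓝 0) := by
    rw [hfc]
    have h : ∀ᶠ t in (atBot : Filter ℝ), (0:ℝ) = c t := by
      filter_upwards [eventually_le_atBot (-1 : ℝ)] with t ht
      exact (hc_neg t (by linarith)).symm
    exact Tendsto.congr' h tendsto_const_nhds
  have htop : Tendsto (⇑f) atTop (𝓝 1) := by
    rw [hfc]
    have h : ∀ᶠ t in (atTop : Filter ℝ), (1:ℝ) = c t := by
      filter_upwards [eventually_ge_atTop (1 : ℝ)] with t ht
      exact (hc_one t ht).symm
    exact Tendsto.congr' h tendsto_const_nhds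
  set μ := f.measure with hμdef
  have hprob : IsProbabilityMeasure μ := ⟨by rw [f.measure_univ hbot htop]; simp⟩
  have hleft : ∀ b : ℝ, Function.leftLim c b = P (X ⁻¹' Iio b) := by
    intro b
    have hseqT : Tendsto (fun k : ℕ => b - 1/(k+1)) atTop (𝓝[<] b) := by
      apply tendsto_nhdsWithin_of_tendsto_nhds_of_eventually_within
      · have h := tendsto_const_nhds (x := b) (f := atTop (α := ℕ)) |>.sub
          tendsto_one_div_add_atTop_nhds_zero_nat
        simpa using h
      · filter_upwards with k
        simp only [mem_Iio]
        have : (0:ℝ) < 1/((k:ℝ)+1) := by positivity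
        push_cast
        linarith
    apply le_antisymm
    · have h2 := (hmono.tendsto_leftLim b).comp hseqT
      refine le_of_tendsto h2 (Eventually.of_forall fun k => ?_)
      apply P_mono_zc hO hP (hzero _) (hcoz isOpen_Iio)
      apply preimage_mono
      intro t ht
      simp only [mem_Iic] at ht
      simp only [mem_Iio]
      have : (0:ℝ) < 1/((k:ℝ)+1) := by positivity
      push_cast at ht
      linarith
    · have hm : Monotone fun k : ℕ => X ⁻¹' Iio (b - 1/(k+1)) := by
        apply monotone_nat_of_le_succ
        intro k
        apply preimage_mono
        apply Iio_subset_Iio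
        have h12 : 1/((k:ℝ)+1+1) ≤ 1/((k:ℝ)+1) :=
          one_div_le_one_div_of_le (by positivity) (by linarith)
        push_cast
        linarith
      have hun : (⋃ k : ℕ, X ⁻¹' Iio (b - 1/(k+1))) = X ⁻¹' Iio b := by
        ext ω
        simp only [mem_iUnion, mem_preimage, mem_Iio]
        constructor
        · rintro ⟨k, hk⟩
          have hk1 : (0:ℝ) < 1/((k:ℝ)+1) := by positivity
          linarith
        · intro h
          obtain ⟨n, hn⟩ := exists_nat_one_div_lt (sub_pos.2 h)
          exact ⟨n, by push_cast at hn ⊢; linarith⟩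
      have hmc := hP.2.2.2 _ _ (fun k => hcoz isOpen_Iio) hm (hcoz isOpen_Iio) hun
      refine le_of_tendsto hmc (Eventually.of_forall fun k => ?_)
      have hlt : b - 1/((k:ℝ)+1) < b := by
        have : (0:ℝ) < 1/((k:ℝ)+1) := by positivity
        linarith
      calc P (X ⁻¹' Iio (b - 1/(k+1))) ≤ c (b - 1/(k+1)) :=
            P_mono_cz hO hP (hcoz isOpen_Iio) (hzero _) (preimage_mono Iio_subset_Iic_self)
        _ ≤ Function.leftLim c b := hmono.le_leftLim (by push_cast; linarith)
  have hIoo : ∀ a b : ℝ, μ (Ioo a b) = ENNReal.ofReal (P (X ⁻¹' Ioo a b)) := by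
    intro a b
    rcases le_or_gt b a with hba | hab
    · have h1' : Ioo a b = ∅ := Ioo_eq_empty (not_lt.2 hba)
      rw [h1']
      simp [P_empty hO hP hX]
    · have hd : Disjoint (X ⁻¹' Iic a) (X ⁻¹' Ioo a b) := by
        apply Disjoint.preimage
        rw [Set.disjoint_left]
        rintro t ht ⟨ht1, _⟩
        exact absurd ht (not_le.2 ht1)
      have huu : Iic a ∪ Ioo a b = Iio b := by
        ext t
        simp only [mem_union, mem_Iic, mem_Ioo, mem_Iio]
        constructor
        · rintro (h | ⟨_, h⟩)
          · linarith
          · exact h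
        · intro h
          rcases le_or_gt t a with h' | h'
          · exact Or.inl h'
          · exact Or.inr ⟨h', h⟩
      have hu : X ⁻¹' Iic a ∪ X ⁻¹' Ioo a b = X ⁻¹' Iio b := by
        rw [← preimage_union, huu]
      have hadd := hP.1 _ _ (Or.inl (hzero a)) (Or.inr (hcoz isOpen_Ioo)) hd
        (by rw [hu]; exact Or.inr (hcoz isOpen_Iio))
      rw [hu] at hadd
      have hkey : P (X ⁻¹' Ioo a b) = Function.leftLim c b - c a := by
        rw [hleft b]
        simp only [hcdef] at hadd ⊢
        linarith
      rw [StieltjesFunction.measure_Ioo, hfc, hkey]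
  have main : ∀ V : Set ℝ, IsOpen V → μ V = ENNReal.ofReal (P (X ⁻¹' V)) := by
    intro V hV
    set V' := V ∩ Ioo (-1 : ℝ) 2 with hV'def
    have hV'open : IsOpen V' := hV.inter isOpen_Ioo
    have hpre : X ⁻¹' V = X ⁻¹' V' := by
      ext ω
      simp only [hV'def, mem_preimage, mem_inter_iff, mem_Ioo]
      exact ⟨fun h => ⟨h, by linarith [h0 ω], by linarith [h1 ω]⟩, fun h => h.1⟩
    have hμIic : μ (Iic (-1 : ℝ)) = 0 := by
      rw [f.measure_Iic hbot (-1 : ℝ), hfc, hc_neg (-1) (by norm_num)]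
      simp
    have hleft2 : Function.leftLim c 2 = 1 := by
      have hnb : (𝓝[<] (2:ℝ)).NeBot := inferInstance
      apply leftLim_eq_of_tendsto
      have hev : ∀ᶠ t in 𝓝[<] (2:ℝ), (1:ℝ) = c t := by
        filter_upwards [Ioo_mem_nhdsLT_of_mem (by norm_num : (2:ℝ) ∈ Ioc (1:ℝ) 2)] with t ht
        exact (hc_one t ht.1.le).symm
      exact Tendsto.congr' hev tendsto_const_nhds
    have hμIci : μ (Ici (2:ℝ)) = 0 := by
      rw [f.measure_Ici htop 2, hfc, hleft2]
      simp
    have hμV : μ V = μ V' := by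
      apply le_antisymm _ (measure_mono inter_subset_left)
      have hsub : V ⊆ V' ∪ (Iic (-1) ∪ Ici 2) := by
        intro x hx
        by_cases h1x : x ≤ -1
        · exact Or.inr (Or.inl h1x)
        · by_cases h2x : (2:ℝ) ≤ x
          · exact Or.inr (Or.inr h2x)
          · push_neg at h1x h2x
            exact Or.inl ⟨hx, h1x, h2x⟩
      calc μ V ≤ μ (V' ∪ (Iic (-1) ∪ Ici 2)) := measure_mono hsub
        _ ≤ μ V' + μ (Iic (-1) ∪ Ici 2) := measure_union_le _ _
        _ ≤ μ V' + (μ (Iic (-1)) + μ (Ici 2)) := by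
            gcongr
            exact measure_union_le _ _
        _ = μ V' := by rw [hμIic, hμIci]; simp
    set cc : ℚ → Set ℝ :=
      fun q => if ((q:ℝ) ∈ V') then connectedComponentIn V' (q:ℝ) else ∅ with hccdef
    have hcc_open : ∀ q, IsOpen (cc q) := by
      intro q
      simp only [hccdef]
      split
      · exact hV'open.connectedComponentIn
      · exact isOpen_empty
    have hcc_sub : ∀ q, cc q ⊆ V' := by
      intro q
      simp only [hccdef]
      split
      · exact connectedComponentIn_subset _ _
      · exact empty_subset _
    have hcc_cc : ∀ q : ℚ, ((q:ℝ) ∈ V') → cc q = connectedComponentIn V' (q:ℝ) := by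
      intro q hq
      simp only [hccdef, if_pos hq]
    have hV'bdd : V' ⊆ Ioo (-1:ℝ) 2 := inter_subset_right
    have hcc_ioo : ∀ q, cc q = ∅ ∨ ∃ a b : ℝ, a < b ∧ cc q = Ioo a b := by
      intro q
      by_cases hq : (q:ℝ) ∈ V'
      · right
        rw [hcc_cc q hq]
        set C := connectedComponentIn V' (q:ℝ) with hC
        have hqC : (q:ℝ) ∈ C := mem_connectedComponentIn hq
        have hCo : IsOpen C := hV'open.connectedComponentIn
        have hCsub : C ⊆ Ioo (-1:ℝ) 2 := (connectedComponentIn_subset _ _).trans hV'bdd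
        have hbb : BddBelow C := ⟨-1, fun x hx => (hCsub hx).1.le⟩
        have hba : BddAbove C := ⟨2, fun x hx => (hCsub hx).2.le⟩
        have hCne : C.Nonempty := ⟨q, hqC⟩
        have hsub2 : C ⊆ Ioo (sInf C) (sSup C) := by
          intro x hx
          obtain ⟨ε, hε, hball⟩ := Metric.isOpen_iff.mp hCo x hx
          have hx1 : x - ε/2 ∈ C := by
            apply hball
            rw [Metric.mem_ball, Real.dist_eq, show x - ε/2 - x = -(ε/2) by ring, abs_neg,
              abs_of_nonneg (by linarith)]
            linarith
          have hx2 : x + ε/2 ∈ C := by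
            apply hball
            rw [Metric.mem_ball, Real.dist_eq, show x + ε/2 - x = ε/2 by ring,
              abs_of_nonneg (by linarith)]
            linarith
          constructor
          · exact lt_of_le_of_lt (csInf_le hbb hx1) (by linarith)
          · exact lt_of_lt_of_le (by linarith : x < x + ε/2) (le_csSup hba hx2)
        have hsub3 : Ioo (sInf C) (sSup C) ⊆ C := by
          intro y hy
          obtain ⟨u, hu, hu2⟩ := exists_lt_of_csInf_lt hCne hy.1
          obtain ⟨v, hv, hv2⟩ := exists_lt_of_lt_csSup hCne hy.2
          exact (isPreconnected_connectedComponentIn.ordConnected).out hu hv ⟨hu2.le, hv2.le⟩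
        have hCeq : C = Ioo (sInf C) (sSup C) := Subset.antisymm hsub2 hsub3
        have hmem : (q:ℝ) ∈ Ioo (sInf C) (sSup C) := hCeq ▸ hqC
        exact ⟨sInf C, sSup C, lt_trans hmem.1 hmem.2, hCeq⟩
      · left
        simp only [hccdef, if_neg hq]
    have hcover : (⋃ q : ℚ, cc q) = V' := by
      apply subset_antisymm (iUnion_subset hcc_sub)
      intro x hx
      have hxC : x ∈ connectedComponentIn V' x := mem_connectedComponentIn hx
      have hCo : IsOpen (connectedComponentIn V' x) := hV'open.connectedComponentIn
      obtain ⟨ε, hε, hball⟩ := Metric.isOpen_iff.mp hCo x hxC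
      obtain ⟨q, hq1, hq2⟩ := exists_rat_btwn (show x - ε < x by linarith)
      have hqC : (q:ℝ) ∈ connectedComponentIn V' x := by
        apply hball
        rw [Metric.mem_ball, Real.dist_eq, abs_of_nonpos (by linarith)]
        linarith
      have hqV' : (q:ℝ) ∈ V' := connectedComponentIn_subset _ _ hqC
      have hceq : connectedComponentIn V' x = connectedComponentIn V' (q:ℝ) :=
        connectedComponentIn_eq hqC
      refine mem_iUnion.2 ⟨q, ?_⟩
      rw [hcc_cc q hqV', ← hceq]
      exact hxC
    obtain ⟨e, he⟩ := exists_surjective_nat ℚ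
    set W : ℕ → Set ℝ := fun n => ⋃ k < n, cc (e k) with hWdef
    have hWopen : ∀ n, IsOpen (W n) := fun n => isOpen_biUnion (fun k _ => hcc_open (e k))
    have hWmono : Monotone W := by
      intro m n hmn
      simp only [hWdef]
      intro x hx
      obtain ⟨k, hk, hxk⟩ := mem_iUnion₂.mp hx
      exact mem_iUnion₂.mpr ⟨k, lt_of_lt_of_le hk hmn, hxk⟩
    have hWunion : (⋃ n, W n) = V' := by
      rw [← hcover]
      apply subset_antisymm
      · refine iUnion_subset fun n => ?_
        simp only [hWdef]
        exact iUnion₂_subset fun k _ => subset_iUnion _ (e k)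
      · intro x hx
        obtain ⟨q, hq⟩ := mem_iUnion.mp hx
        obtain ⟨k, rfl⟩ := he q
        refine mem_iUnion.2 ⟨k+1, ?_⟩
        simp only [hWdef]
        exact mem_iUnion₂.mpr ⟨k, Nat.lt_succ_self k, hq⟩
    have hWsucc : ∀ n, W (n+1) = W n ∪ cc (e n) := by
      intro n
      simp only [hWdef]
      exact Set.biUnion_lt_succ _ _
    have hkey : ∀ n, μ (W n) = ENNReal.ofReal (P (X ⁻¹' W n)) := by
      intro n
      induction n with
      | zero =>
        have h0' : W 0 = ∅ := by simp [hWdef]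
        rw [h0']
        simp [P_empty hO hP hX]
      | succ n ih =>
        by_cases hint : (cc (e n) ∩ W n).Nonempty
        · obtain ⟨z, hz1, hz2⟩ := hint
          obtain ⟨k, hk, hzk⟩ := mem_iUnion₂.mp hz2
          have hen : ((e n : ℚ) : ℝ) ∈ V' := by
            by_contra h
            rw [hccdef] at hz1
            simp only [if_neg h] at hz1
            exact hz1
          have hek : ((e k : ℚ) : ℝ) ∈ V' := by
            by_contra h
            rw [hccdef] at hzk
            simp only [if_neg h] at hzk
            exact hzk
          have h1' : cc (e n) = connectedComponentIn V' z := by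
            rw [hcc_cc _ hen] at hz1 ⊢
            exact connectedComponentIn_eq hz1
          have h2' : cc (e k) = connectedComponentIn V' z := by
            rw [hcc_cc _ hek] at hzk ⊢
            exact connectedComponentIn_eq hzk
          have hsubW : cc (e n) ⊆ W n := by
            rw [h1', ← h2']
            intro y hy
            exact mem_iUnion₂.mpr ⟨k, hk, hy⟩
          rw [hWsucc n, union_eq_self_of_subset_right hsubW]
          exact ih
        · have hdisj : Disjoint (W n) (cc (e n)) := by
            rw [Set.not_nonempty_iff_eq_empty] at hint
            exact Set.disjoint_iff_inter_eq_empty.2 (by rw [inter_comm]; exact hint)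
          have hbase : μ (cc (e n)) = ENNReal.ofReal (P (X ⁻¹' cc (e n))) := by
            rcases hcc_ioo (e n) with h | ⟨a, b, hab, h⟩
            · rw [h]
              simp [P_empty hO hP hX]
            · rw [h]
              exact hIoo a b
          have hμadd : μ (W (n+1)) = μ (W n) + μ (cc (e n)) := by
            rw [hWsucc n]
            exact measure_union hdisj (hcc_open (e n)).measurableSet
          have hPadd : P (X ⁻¹' W (n+1)) = P (X ⁻¹' W n) + P (X ⁻¹' cc (e n)) := by
            rw [hWsucc n, preimage_union]
            exact hP.1 _ _ (Or.inr (hcoz (hWopen n))) (Or.inr (hcoz (hcc_open (e n))))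
              (hdisj.preimage X)
              (Or.inr (by rw [← preimage_union]; exact hcoz ((hWopen n).union (hcc_open (e n)))))
          rw [hμadd, hPadd,
            ENNReal.ofReal_add (hPpos (Or.inr (hcoz (hWopen n))))
              (hPpos (Or.inr (hcoz (hcc_open (e n))))), ih, hbase]
    have t1 : Tendsto (fun n => μ (W n)) atTop (𝓝 (μ V')) := by
      rw [← hWunion]
      exact tendsto_measure_iUnion_atTop hWmono
    have t2 : Tendsto (fun n => ENNReal.ofReal (P (X ⁻¹' W n))) atTop
        (𝓝 (ENNReal.ofReal (P (X ⁻¹' V')))) := by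
      apply (ENNReal.continuous_ofReal.tendsto _).comp
      apply hP.2.2.2 _ _ (fun n => hcoz (hWopen n)) (fun m n h => preimage_mono (hWmono h))
        (hcoz hV'open)
      rw [← preimage_iUnion, hWunion]
    have hfin := tendsto_nhds_unique (t1.congr (fun n => hkey n)) t2
    rw [hμV, hfin, hpre]
  exact ⟨μ, hprob, main⟩

end Dist


/-- inner regularity of an observable probability,
`P U = sup {P F : F zero set ⊆ U} = sup {∫ X dP : X ⪯ U}`. -/
theorem obsProb_inner_regular {Ω : Type*} [Nonempty Ω]
    (o : Set (Ω → ℝ)) (hO : IsObsAlg o) (P : Set Ω → ℝ) (hP : IsObsProb o P)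
    (U : Set Ω) (hU : IsCozeroSet o U) :
    P U = sSup {r | ∃ F : Set Ω, IsZeroSet o F ∧ F ⊆ U ∧ r = P F} ∧
    P U = sSup {r | ∃ X ∈ o, PrecU o X U ∧
      ∃ μ : Measure ℝ, IsDistribution o P X μ ∧ r = ∫ t, t ∂μ} := by
  refine ⟨part1 hO hP U hU, ?_⟩
  obtain ⟨g, hg, hUc⟩ := hU
  have hUcoz : IsCozeroSet o U := ⟨g, hg, hUc⟩
  have hUobs : IsObsSet o U := Or.inr hUcoz
  have hUg : U = {ω | g ω ≠ 0} := by
    have h := congrArg compl hUc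
    rw [compl_compl] at h
    rw [h]
    ext ω; simp
  set S := {r | ∃ X ∈ o, PrecU o X U ∧
      ∃ μ : Measure ℝ, IsDistribution o P X μ ∧ r = ∫ t, t ∂μ} with hSdef
  -- upper bound : every element of S is ≤ P U
  have hbddS : ∀ r ∈ S, r ≤ P U := by
    rintro r ⟨X, hX, ⟨F, hF, hXF, hFU⟩, μ, ⟨hμprob, hμopen⟩, rfl⟩
    have hPU0 : 0 ≤ P U := hP.2.1 U hUobs
    by_cases hInt : Integrable (fun t => t) μ
    · have hX1 : ∀ ω, X ω ≤ 1 := by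
        intro ω
        refine le_trans (hXF ω) ?_
        by_cases h : ω ∈ F
        · rw [Set.indicator_of_mem h]
        · rw [Set.indicator_of_notMem h]; norm_num
      have hIoi1 : μ (Ioi (1:ℝ)) = 0 := by
        rw [hμopen _ isOpen_Ioi]
        have hemp : X ⁻¹' Ioi 1 = ∅ := by
          ext ω
          simp only [mem_preimage, mem_Ioi, mem_empty_iff_false, iff_false, not_lt]
          exact hX1 ω
        rw [hemp, P_empty hO hP hg]
        simp
      have hub : ∀ᵐ t ∂μ, t ≤ (Ioi (0:ℝ)).indicator (fun _ => (1:ℝ)) t := by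
        have hae : ∀ᵐ t ∂μ, t ∉ Ioi (1:ℝ) := measure_eq_zero_iff_ae_notMem.mp hIoi1
        filter_upwards [hae] with t ht
        simp only [mem_Ioi, not_lt] at ht
        by_cases h : t ∈ Ioi (0:ℝ)
        · rw [Set.indicator_of_mem h]; exact ht
        · rw [Set.indicator_of_notMem h]
          simp only [mem_Ioi, not_lt] at h
          exact h
      have hIndInt : Integrable ((Ioi (0:ℝ)).indicator (fun _ => (1:ℝ))) μ :=
        (integrable_const (1:ℝ)).indicator measurableSet_Ioi
      have hle1 : ∫ t, t ∂μ ≤ ∫ t, (Ioi (0:ℝ)).indicator (fun _ => (1:ℝ)) t ∂μ :=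
        integral_mono_ae hInt hIndInt hub
      have hIndval : ∫ t, (Ioi (0:ℝ)).indicator (fun _ => (1:ℝ)) t ∂μ
          = (μ (Ioi 0)).toReal := by
        rw [integral_indicator_const (1:ℝ) measurableSet_Ioi]
        simp
        rfl
      have hμ0 : μ (Ioi (0:ℝ)) = ENNReal.ofReal (P (X ⁻¹' Ioi 0)) := hμopen _ isOpen_Ioi
      have hXF0 : X ⁻¹' Ioi 0 ⊆ F := by
        intro ω hω
        simp only [mem_preimage, mem_Ioi] at hω
        by_contra h
        have h2 := hXF ω
        rw [Set.indicator_of_notMem h] at h2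
        linarith
      have hP0 : P (X ⁻¹' Ioi 0) ≤ P U :=
        le_trans (P_mono_cz hO hP (cozero_preimage_open hO hX isOpen_Ioi) hF hXF0)
          (P_mono_zc hO hP hF hUcoz hFU)
      have hP0nn : 0 ≤ P (X ⁻¹' Ioi 0) :=
        hP.2.1 _ (Or.inr (cozero_preimage_open hO hX isOpen_Ioi))
      calc ∫ t, t ∂μ ≤ (μ (Ioi 0)).toReal := by rw [← hIndval]; exact hle1
        _ = P (X ⁻¹' Ioi 0) := by rw [hμ0, ENNReal.toReal_ofReal hP0nn]
        _ ≤ P U := hP0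
    · rw [integral_undef hInt]
      exact hPU0
  -- the approximating sequence
  have habs : (fun ω => |g ω|) ∈ o := comp1 hO hg continuous_abs
  set V : ℕ → Set Ω := fun k => (fun ω => |g ω|) ⁻¹' Ioi (1 / ((k:ℝ) + 1)) with hVdef
  have hVcoz : ∀ k, IsCozeroSet o (V k) := fun k => cozero_preimage_open hO habs isOpen_Ioi
  have hVmono : Monotone V := by
    apply monotone_nat_of_le_succ
    intro k
    apply preimage_mono
    apply Ioi_subset_Ioi
    apply one_div_le_one_div_of_le (by positivity)
    push_cast; linarith
  have hVunion : (⋃ k, V k) = U := by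
    rw [hUg]
    ext ω
    simp only [hVdef, mem_iUnion, mem_preimage, mem_Ioi, mem_setOf_eq]
    constructor
    · rintro ⟨k, hk⟩
      intro h
      simp [h] at hk
      have : (0:ℝ) < 1 / ((k:ℝ)+1) := by positivity
      linarith
    · intro h
      obtain ⟨n, hn⟩ := exists_nat_one_div_lt (abs_pos.2 h)
      exact ⟨n, by exact_mod_cast hn⟩
  have htend : Tendsto (fun k => P (V k)) atTop (𝓝 (P U)) :=
    hP.2.2.2 V U hVcoz hVmono hUcoz hVunion
  have key : ∀ k : ℕ, ∃ r ∈ S, (1 - 1/((k:ℝ)+1)) * P (V k) ≤ r := by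
    intro k
    set a : ℝ := 1/((k:ℝ)+2) with hadef
    set b : ℝ := 1/((k:ℝ)+1) with hbdef
    have hb0 : 0 < b := by rw [hbdef]; positivity
    have ha0 : 0 < a := by rw [hadef]; positivity
    have hab : a < b := by
      rw [hadef, hbdef]
      apply one_div_lt_one_div_of_lt (by positivity)
      linarith
    set s : ℝ := 1 - 1/((k:ℝ)+1) with hsdef
    have hs0 : 0 ≤ s := by
      rw [hsdef]
      have : 1/((k:ℝ)+1) ≤ 1 := by
        rw [div_le_one (by positivity)]
        linarith
      linarith
    have hs1 : s < 1 := by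
      rw [hsdef]
      have : (0:ℝ) < 1/((k:ℝ)+1) := by positivity
      linarith
    set φ : ℝ → ℝ := fun t => min 1 (max 0 ((|t| - a)/(b - a))) with hφdef
    have hφcont : Continuous φ := by
      apply continuous_const.min
      apply continuous_const.max
      exact (continuous_abs.sub continuous_const).div_const _
    set X : Ω → ℝ := fun ω => φ (g ω) with hXdef
    have hX : X ∈ o := comp1 hO hg hφcont
    have h0X : ∀ ω, 0 ≤ X ω := fun ω => le_min zero_le_one (le_max_left _ _)
    have h1X : ∀ ω, X ω ≤ 1 := fun ω => min_le_left _ _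
    set Fa : Set Ω := (fun ω => |g ω|) ⁻¹' Ici a with hFadef
    have hFaz : IsZeroSet o Fa := zero_preimage_closed hO habs isClosed_Ici
    have hFaU : Fa ⊆ U := by
      intro ω hω
      rw [hUg]
      simp only [hFadef, mem_preimage, mem_Ici] at hω
      simp only [mem_setOf_eq]
      intro h
      rw [h] at hω
      simp at hω
      linarith
    have hXF : ∀ ω, X ω ≤ Fa.indicator (fun _ => (1:ℝ)) ω := by
      intro ω
      by_cases h : ω ∈ Fa
      · rw [Set.indicator_of_mem h]
        exact h1X ω
      · rw [Set.indicator_of_notMem h]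
        simp only [hFadef, mem_preimage, mem_Ici, not_le] at h
        have hneg : (|g ω| - a)/(b - a) < 0 := div_neg_of_neg_of_pos (by linarith) (by linarith)
        have : max 0 ((|g ω| - a)/(b - a)) = 0 := max_eq_left hneg.le
        simp only [hXdef, hφdef, this]
        simp
    obtain ⟨μ, hμdist⟩ := exists_distribution hO hP hX h0X h1X
    refine ⟨∫ t, t ∂μ, ⟨X, hX, ⟨Fa, hFaz, hXF, hFaU⟩, μ, hμdist, rfl⟩, ?_⟩
    obtain ⟨hμprob, hμopen⟩ := hμdist
    -- integrability and bounds
    have hIoi1 : μ (Ioi (1:ℝ)) = 0 := by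
      rw [hμopen _ isOpen_Ioi]
      have hemp : X ⁻¹' Ioi 1 = ∅ := by
        ext ω
        simp only [mem_preimage, mem_Ioi, mem_empty_iff_false, iff_false, not_lt]
        exact h1X ω
      rw [hemp, P_empty hO hP hg]
      simp
    have hIio0 : μ (Iio (0:ℝ)) = 0 := by
      rw [hμopen _ isOpen_Iio]
      have hemp : X ⁻¹' Iio 0 = ∅ := by
        ext ω
        simp only [mem_preimage, mem_Iio, mem_empty_iff_false, iff_false, not_lt]
        exact h0X ω
      rw [hemp, P_empty hO hP hg]
      simp
    have haeIcc : ∀ᵐ t ∂μ, t ∈ Icc (0:ℝ) 1 := by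
      have hz : μ (Iio 0 ∪ Ioi 1) = 0 := by
        apply le_antisymm _ (zero_le)
        calc μ (Iio 0 ∪ Ioi 1) ≤ μ (Iio 0) + μ (Ioi 1) := measure_union_le _ _
          _ = 0 := by rw [hIio0, hIoi1]; simp
      have h := measure_eq_zero_iff_ae_notMem.mp hz
      filter_upwards [h] with t ht
      simp only [mem_union, mem_Iio, mem_Ioi, not_or, not_lt] at ht
      exact ⟨ht.1, ht.2⟩
    have hInt : Integrable (fun t => t) μ := by
      apply Integrable.mono' (integrable_const (1:ℝ)) aestronglyMeasurable_id
      filter_upwards [haeIcc] with t ht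
      simp only [id_eq]
      rw [Real.norm_eq_abs, abs_le]
      exact ⟨by linarith [ht.1], ht.2⟩
    have hIndInt : Integrable ((Ioi s).indicator (fun _ => s)) μ :=
      (integrable_const s).indicator measurableSet_Ioi
    have hae2 : ∀ᵐ t ∂μ, (Ioi s).indicator (fun _ => s) t ≤ t := by
      filter_upwards [haeIcc] with t ht
      by_cases h : t ∈ Ioi s
      · rw [Set.indicator_of_mem h]
        exact le_of_lt h
      · rw [Set.indicator_of_notMem h]
        exact ht.1
    have hle1 : ∫ t, (Ioi s).indicator (fun _ => s) t ∂μ ≤ ∫ t, t ∂μ :=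
      integral_mono_ae hIndInt hInt hae2
    have hIndval : ∫ t, (Ioi s).indicator (fun _ => s) t ∂μ = (μ (Ioi s)).toReal * s := by
      rw [integral_indicator_const s measurableSet_Ioi]
      simp [smul_eq_mul]
      exact Or.inl rfl
    have hμs : μ (Ioi s) = ENNReal.ofReal (P (X ⁻¹' Ioi s)) := hμopen _ isOpen_Ioi
    have hPsnn : 0 ≤ P (X ⁻¹' Ioi s) :=
      hP.2.1 _ (Or.inr (cozero_preimage_open hO hX isOpen_Ioi))
    -- P (V k) ≤ P (X ⁻¹' Ioi s)
    have hVFb : V k ⊆ (fun ω => |g ω|) ⁻¹' Ici b := by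
      apply preimage_mono
      exact Ioi_subset_Ici_self
    have hFbX : (fun ω => |g ω|) ⁻¹' Ici b ⊆ X ⁻¹' Ioi s := by
      intro ω hω
      simp only [mem_preimage, mem_Ici] at hω
      simp only [mem_preimage, mem_Ioi]
      have hge1 : (1:ℝ) ≤ (|g ω| - a)/(b - a) := by
        rw [le_div_iff₀ (by linarith)]
        linarith
      have hmax : (1:ℝ) ≤ max 0 ((|g ω| - a)/(b - a)) := le_trans hge1 (le_max_right _ _)
      have hXω : X ω = 1 := by
        simp only [hXdef, hφdef]
        exact min_eq_left hmax
      rw [hXω]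
      exact hs1
    have hPV : P (V k) ≤ P (X ⁻¹' Ioi s) :=
      le_trans
        (P_mono_cz hO hP (hVcoz k) (zero_preimage_closed hO habs isClosed_Ici) hVFb)
        (P_mono_zc hO hP (zero_preimage_closed hO habs isClosed_Ici)
          (cozero_preimage_open hO hX isOpen_Ioi) hFbX)
    calc (1 - 1/((k:ℝ)+1)) * P (V k) = P (V k) * s := by rw [hsdef]; ring
      _ ≤ P (X ⁻¹' Ioi s) * s := mul_le_mul_of_nonneg_right hPV hs0
      _ = (μ (Ioi s)).toReal * s := by rw [hμs, ENNReal.toReal_ofReal hPsnn]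
      _ ≤ ∫ t, t ∂μ := by rw [← hIndval]; exact hle1
  -- conclude
  have hSne : S.Nonempty := by
    obtain ⟨r, hr, _⟩ := key 0
    exact ⟨r, hr⟩
  have hBdd : BddAbove S := ⟨P U, fun r hr => hbddS r hr⟩
  apply le_antisymm _ (csSup_le hSne hbddS)
  have htend2 : Tendsto (fun k : ℕ => (1 - 1/((k:ℝ)+1)) * P (V k)) atTop (𝓝 (P U)) := by
    have h1 : Tendsto (fun k : ℕ => 1 - 1/((k:ℝ)+1)) atTop (𝓝 1) := by
      have h := tendsto_const_nhds (x := (1:ℝ)) (f := atTop (α := ℕ)) |>.sub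
        tendsto_one_div_add_atTop_nhds_zero_nat
      simpa using h
    have h2 := h1.mul htend
    simpa using h2
  refine le_of_tendsto htend2 (Eventually.of_forall fun k => ?_)
  obtain ⟨r, hrS, hrle⟩ := key k
  exact le_trans hrle (le_csSup hBdd hrS)
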